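/- For every continuous valuation μ on X and every directed family (in the pointwise order) of lower semicontinuous functions hₐ : X → [0,∞], one has ∫ (supₐ hₐ) dμ = supₐ ∫ hₐ dμ. -/

import Mathlib

open Set ENNReal NNReal TopologicalSpace MeasureTheory
open scoped Classical

/-- A continuous valuation on a topological space `X`: a strict, monotone, modular,
Scott-continuous map from the open sets of `X` to `ℝ≥0∞`. -/
structure ContValuation (X : Type*) [TopologicalSpace X] where
  toFun : Opens X → ℝ≥0∞
  strict' : toFun ⊥ = 0
  mono' : ∀ U V : Opens X, U ≤ V → toFun U ≤ toFun V
  modular' : ∀ U V : Opens X, toFun U + toFun V = toFun (U ⊔ V) + toFun (U ⊓ V)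
  scott' : ∀ S : Set (Opens X), S.Nonempty → DirectedOn (· ≤ ·) S →
    toFun (sSup S) = ⨆ U ∈ S, toFun U

/-- The stochastic order on continuous valuations: pointwise order on open sets. -/
def stochLE {X : Type*} [TopologicalSpace X] (μ ν : ContValuation X) : Prop :=
  ∀ U : Opens X, μ.toFun U ≤ ν.toFun U

/-- The Choquet integral `∫ h dμ = ∫₀^∞ μ(h⁻¹(r,∞]) dr` of a lower semicontinuous
function `h : X → ℝ≥0∞` with respect to a continuous valuation `μ`. -/
noncomputable def choquet {X : Type*} [TopologicalSpace X] (μ : ContValuation X)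
    (h : X → ℝ≥0∞) (hh : LowerSemicontinuous h) : ℝ≥0∞ :=
  ∫⁻ r in Set.Ioi (0 : ℝ), μ.toFun ⟨h ⁻¹' Set.Ioi (ENNReal.ofReal r), hh.isOpen_preimage _⟩


section ChoquetAux

/-- Auxiliary: a directed supremum passes out of a `tsum` in `ℝ≥0∞`. -/
lemma tsum_iSup_le_aux {ι : Type*} [Nonempty ι] (c : ι → ℕ → ℝ≥0∞)
    (hdir : Directed (fun x y : ℕ → ℝ≥0∞ => ∀ k, x k ≤ y k) c) :
    ∑' k, ⨆ a, c a k ≤ ⨆ a, ∑' k, c a k := by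
  rw [ENNReal.tsum_eq_iSup_sum]
  refine iSup_le fun F => ?_
  have key : ∀ F : Finset ℕ, ∑ k ∈ F, ⨆ a, c a k ≤ ⨆ a, ∑ k ∈ F, c a k := by
    intro F
    induction F using Finset.induction with
    | empty => simp
    | @insert k s hk ih =>
      rw [Finset.sum_insert hk]
      have : (⨆ a, c a k) + ⨆ a, ∑ j ∈ s, c a j = ⨆ a, (c a k + ∑ j ∈ s, c a j) := by
        refine ENNReal.iSup_add_iSup fun i j => ?_
        obtain ⟨m, hi, hj⟩ := hdir i j
        exact ⟨m, add_le_add (hi k) (Finset.sum_le_sum fun x _ => hj x)⟩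
      calc (⨆ a, c a k) + ∑ k ∈ s, ⨆ a, c a k ≤ (⨆ a, c a k) + ⨆ a, ∑ j ∈ s, c a j :=
            add_le_add_right ih _
        _ = ⨆ a, (c a k + ∑ j ∈ s, c a j) := this
        _ ≤ ⨆ a, ∑ j ∈ insert k s, c a j := by
            refine iSup_mono fun a => ?_
            rw [Finset.sum_insert hk]
  exact (key F).trans (iSup_mono fun a => ENNReal.sum_le_tsum F)

/-- Auxiliary: the integral of a dyadic step discretization as a `tsum`. -/
lemma step_lintegral_aux (f : ℝ → ℝ≥0∞) (n : ℕ) :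
    ∫⁻ r in Set.Ioi (0:ℝ), f ((⌈r * 2^n⌉₊ : ℝ) / 2^n) =
      ∑' k : ℕ, f ((k+1) / 2^n) * ENNReal.ofReal ((2:ℝ)^n)⁻¹ := by
  have h2 : (0:ℝ) < 2^n := by positivity
  have hU : Set.Ioi (0:ℝ) = ⋃ k : ℕ, Ioc ((k:ℝ)/2^n) ((k+1)/2^n) := by
    ext x
    simp only [mem_Ioi, mem_iUnion, mem_Ioc]
    constructor
    · intro hx
      have hm : 1 ≤ ⌈x * 2^n⌉₊ := by
        rw [Nat.one_le_ceil_iff]; positivity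
      refine ⟨⌈x * 2^n⌉₊ - 1, ?_, ?_⟩
      · rw [div_lt_iff₀ h2]
        have h1 : (⌈x * 2^n⌉₊ - 1 : ℕ) < ⌈x * 2^n⌉₊ := by omega
        exact Nat.lt_ceil.mp h1
      · rw [le_div_iff₀ h2]
        have := Nat.le_ceil (x * 2^n)
        have hc : ((⌈x * 2^n⌉₊ - 1 : ℕ) : ℝ) + 1 = (⌈x * 2^n⌉₊ : ℝ) := by
          rw [Nat.cast_sub hm]; ring
        rw [hc]; exact this
    · rintro ⟨k, hk1, -⟩
      exact lt_of_le_of_lt (by positivity) hk1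
  have hmono : Monotone (fun k : ℕ => (k:ℝ)/2^n) := fun a b hab => by
    have h : (a:ℝ) ≤ b := by exact_mod_cast hab
    exact div_le_div_of_nonneg_right h h2.le |>.trans_eq rfl
  have hdisj : Pairwise (Function.onFun Disjoint fun k : ℕ => Ioc ((k:ℝ)/2^n) ((k+1)/2^n)) := by
    have := hmono.pairwise_disjoint_on_Ioc_succ
    simpa using this
  rw [hU, lintegral_iUnion (fun k => measurableSet_Ioc) hdisj]
  congr 1
  ext k
  have hconst : ∀ r ∈ Ioc ((k:ℝ)/2^n) ((k+1)/2^n),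
      f ((⌈r * 2^n⌉₊ : ℝ) / 2^n) = f ((k+1)/2^n) := by
    intro r ⟨hr1, hr2⟩
    have : ⌈r * 2^n⌉₊ = k + 1 := by
      rw [Nat.ceil_eq_iff (by omega)]
      constructor
      · have := (div_lt_iff₀ h2).mp hr1
        simpa using this
      · have := (le_div_iff₀ h2).mp hr2
        simpa using this
    rw [this]; push_cast; ring_nf
  rw [setLIntegral_congr_fun measurableSet_Ioc
    hconst]
  rw [setLIntegral_const, Real.volume_Ioc]
  congr 2
  field_simp
  ring

/-- Auxiliary: translation invariance of the Lebesgue integral on a half line. -/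
lemma shift_lintegral_aux (f : ℝ → ℝ≥0∞) (δ : ℝ) :
    ∫⁻ r in Set.Ioi (0:ℝ), f (r + δ) = ∫⁻ r in Set.Ioi δ, f r := by
  have h := (measurePreserving_add_right (volume : Measure ℝ) δ).setLIntegral_comp_preimage_emb
    (MeasurableEquiv.addRight δ).measurableEmbedding f (Set.Ioi δ)
  have hs : (· + δ) ⁻¹' Set.Ioi δ = Set.Ioi (0:ℝ) := by
    ext x; simp [lt_add_iff_pos_left]
  rwa [hs] at h

/-- Auxiliary: the integral over `(0, ∞)` is the supremum of integrals over `(2⁻ⁿ, ∞)`. -/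
lemma sup_Ioi_lintegral_aux (f : ℝ → ℝ≥0∞) :
    ∫⁻ r in Set.Ioi (0:ℝ), f r = ⨆ n : ℕ, ∫⁻ r in Set.Ioi (((2:ℝ)^n)⁻¹), f r := by
  have hU : (⋃ n : ℕ, Set.Ioi (((2:ℝ)^n)⁻¹)) = Set.Ioi (0:ℝ) := by
    ext x
    simp only [mem_iUnion, mem_Ioi]
    constructor
    · rintro ⟨n, hn⟩; exact lt_trans (by positivity) hn
    · intro hx
      obtain ⟨n, hn⟩ := pow_unbounded_of_one_lt x⁻¹ (by norm_num : (1:ℝ) < 2)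
      exact ⟨n, by rwa [inv_lt_comm₀ (by positivity) hx]⟩
  have hdir : Directed (· ⊆ ·) (fun n : ℕ => Set.Ioi (((2:ℝ)^n)⁻¹)) := by
    refine directed_of_isDirected_le (fun a b hab => Ioi_subset_Ioi ?_)
    gcongr
    norm_num
  have := hdir.measure_iUnion (μ := volume.withDensity f)
  rw [hU] at this
  rw [← withDensity_apply f measurableSet_Ioi, this]
  exact iSup_congr fun n => withDensity_apply f measurableSet_Ioi

end ChoquetAux

/-- The Choquet integral commutes with directed suprema of lower semicontinuous
integrands: `∫ (supₐ hₐ) dμ = supₐ ∫ hₐ dμ` for a directed (in the pointwise order)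
family of lower semicontinuous functions `hₐ : X → [0,∞]`. -/
theorem choquet_directed_sup {X : Type*} [TopologicalSpace X] {ι : Type*} [Nonempty ι]
    (μ : ContValuation X) (h : ι → X → ℝ≥0∞) (hh : ∀ a, LowerSemicontinuous (h a))
    (hdir : Directed (fun g₁ g₂ : X → ℝ≥0∞ => ∀ x, g₁ x ≤ g₂ x) h)
    (hsup : LowerSemicontinuous fun x => ⨆ a, h a x) :
    choquet μ (fun x => ⨆ a, h a x) hsup = ⨆ a, choquet μ (h a) (hh a) := by
  set g : ι → ℝ → ℝ≥0∞ := fun a r =>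
    μ.toFun ⟨h a ⁻¹' Set.Ioi (ENNReal.ofReal r), (hh a).isOpen_preimage _⟩ with hgdef
  set G : ℝ → ℝ≥0∞ := fun r =>
    μ.toFun ⟨(fun x => ⨆ a, h a x) ⁻¹' Set.Ioi (ENNReal.ofReal r), hsup.isOpen_preimage _⟩
    with hGdef
  -- monotonicity of μ transported to g
  have hgle : ∀ {a b : ι}, (∀ x, h a x ≤ h b x) → ∀ r, g a r ≤ g b r := by
    intro a b hab r
    exact μ.mono' _ _ fun x hx => lt_of_lt_of_le hx (hab x)
  have hganti : ∀ a, Antitone (g a) := by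
    intro a r s hrs
    exact μ.mono' _ _ fun x hx => lt_of_le_of_lt (ENNReal.ofReal_le_ofReal hrs) hx
  have hGanti : Antitone G := by
    intro r s hrs
    exact μ.mono' _ _ fun x hx => lt_of_le_of_lt (ENNReal.ofReal_le_ofReal hrs) hx
  -- pointwise: G r = ⨆ a, g a r
  have hGg : ∀ r : ℝ, G r = ⨆ a, g a r := by
    intro r
    set U : ι → Opens X := fun a =>
      ⟨h a ⁻¹' Set.Ioi (ENNReal.ofReal r), (hh a).isOpen_preimage _⟩ with hUdef
    have hdirU : Directed (· ≤ ·) U := by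
      intro a b
      obtain ⟨c, hac, hbc⟩ := hdir a b
      exact ⟨c, fun x hx => lt_of_lt_of_le hx (hac x), fun x hx => lt_of_lt_of_le hx (hbc x)⟩
    have hsSup : (⟨(fun x => ⨆ a, h a x) ⁻¹' Set.Ioi (ENNReal.ofReal r),
        hsup.isOpen_preimage _⟩ : Opens X) = sSup (Set.range U) := by
      apply Opens.ext
      rw [Opens.coe_sSup]
      ext x
      simp only [hUdef, Opens.coe_mk, Set.mem_preimage, Set.mem_Ioi, Set.mem_iUnion]
      constructor
      · intro hx
        obtain ⟨a, ha⟩ := lt_iSup_iff.mp hx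
        exact ⟨U a, ⟨⟨a, rfl⟩, ha⟩⟩
      · rintro ⟨V, ⟨⟨a, rfl⟩, ha⟩⟩
        exact lt_iSup_iff.mpr ⟨a, ha⟩
    have := μ.scott' (Set.range U) (Set.range_nonempty U) hdirU.directedOn_range
    rw [hGdef]
    simp only
    rw [hsSup, this, iSup_range]
  have h2pos : ∀ n : ℕ, (0:ℝ) < 2^n := fun n => by positivity
  -- easy direction
  apply le_antisymm
  · -- hard direction
    calc choquet μ (fun x => ⨆ a, h a x) hsup
        = ∫⁻ r in Set.Ioi (0:ℝ), G r := rfl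
      _ = ⨆ n : ℕ, ∫⁻ r in Set.Ioi (((2:ℝ)^n)⁻¹), G r := sup_Ioi_lintegral_aux G
      _ = ⨆ n : ℕ, ∫⁻ r in Set.Ioi (0:ℝ), G (r + ((2:ℝ)^n)⁻¹) := by
          exact iSup_congr fun n => (shift_lintegral_aux G _).symm
      _ ≤ ⨆ n : ℕ, ∫⁻ r in Set.Ioi (0:ℝ), G ((⌈r * 2^n⌉₊ : ℝ) / 2^n) := by
          refine iSup_mono fun n => setLIntegral_mono' measurableSet_Ioi fun r hr => ?_
          refine hGanti ?_
          rw [div_le_iff₀ (h2pos n), add_mul, inv_mul_cancel₀ (h2pos n).ne']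
          have hr' : (0:ℝ) < r := hr
          exact (Nat.ceil_lt_add_one (mul_nonneg hr'.le (h2pos n).le)).le
      _ = ⨆ n : ℕ, ∑' k : ℕ, G (((k:ℕ)+1) / 2^n) * ENNReal.ofReal ((2:ℝ)^n)⁻¹ := by
          exact iSup_congr fun n => step_lintegral_aux G n
      _ = ⨆ n : ℕ, ∑' k : ℕ, ⨆ a, g a (((k:ℕ)+1) / 2^n) * ENNReal.ofReal ((2:ℝ)^n)⁻¹ := by
          refine iSup_congr fun n => tsum_congr fun k => ?_
          rw [hGg, ENNReal.iSup_mul]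
      _ ≤ ⨆ n : ℕ, ⨆ a, ∑' k : ℕ, g a (((k:ℕ)+1) / 2^n) * ENNReal.ofReal ((2:ℝ)^n)⁻¹ := by
          refine iSup_mono fun n => tsum_iSup_le_aux _ ?_
          intro a b
          obtain ⟨c, hac, hbc⟩ := hdir a b
          exact ⟨c, fun k => mul_le_mul_left (hgle hac _) _,
            fun k => mul_le_mul_left (hgle hbc _) _⟩
      _ = ⨆ n : ℕ, ⨆ a, ∫⁻ r in Set.Ioi (0:ℝ), g a ((⌈r * 2^n⌉₊ : ℝ) / 2^n) := by
          exact iSup_congr fun n => iSup_congr fun a => (step_lintegral_aux (g a) n).symm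
      _ ≤ ⨆ n : ℕ, ⨆ a, ∫⁻ r in Set.Ioi (0:ℝ), g a r := by
          refine iSup_mono fun n => iSup_mono fun a =>
            setLIntegral_mono' measurableSet_Ioi fun r hr => ?_
          refine hganti a ?_
          rw [le_div_iff₀ (h2pos n)]
          exact Nat.le_ceil _
      _ = ⨆ a, choquet μ (h a) (hh a) := by rw [iSup_comm]; exact iSup_congr fun a => iSup_const
  · refine iSup_le fun a => setLIntegral_mono' measurableSet_Ioi fun r _ => ?_
    exact μ.mono' _ _ fun x hx => lt_of_lt_of_le hx (le_iSup (fun a => h a x) a)
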